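/- For every σ ∈ Gal(K(μ_{p^n})/K), if c is an integer prime to p with σ(ζ_{p^n}) = ζ_{p^n}^c and c' is an integer with c'·c^{m−1} ≡ 1 (mod p^n), then there exists y ∈ K(μ_{p^n})^× such that σ(ε^{cyc}_{m,n}) = (ε^{cyc}_{m,n})^{c'} · y^{p^n}; in other words σ(ε^{cyc}_{m,n}) ≡ (ε^{cyc}_{m,n})^{ε_cyc(σ)^{1−m}} modulo p^n-th powers in K(μ_{p^n})^×. -/

import Mathlib

open Complex

/-- `ζ_N = exp(2πi/N)`. -/
noncomputable def zeta (N : ℕ) : ℂ := Complex.exp (2 * Real.pi * Complex.I / N)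

/-- `K(μ_N)`, the field obtained from the subfield `K ⊆ ℂ` by adjoining `ζ_N`. -/
noncomputable def Kmu (K : Subfield ℂ) (N : ℕ) : IntermediateField K ℂ :=
  IntermediateField.adjoin K {zeta N}

/-- `ζ_N` as an element of `K(μ_N)`. -/
noncomputable def zetaEl (K : Subfield ℂ) (N : ℕ) : Kmu K N :=
  ⟨zeta N, IntermediateField.subset_adjoin K {zeta N} rfl⟩

/-- The cyclotomic Soulé unit `ε^{cyc}_{m,n} = ∏_{0<a<p^n, p∤a} (1 - ζ_{p^n}^a)^{a^{m-1}}`. -/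
noncomputable def souleUnit (K : Subfield ℂ) (p m n : ℕ) : Kmu K (p ^ n) :=
  ∏ a ∈ (Finset.range (p ^ n)).filter fun a => ¬ p ∣ a,
    (1 - zetaEl K (p ^ n) ^ a) ^ (a ^ (m - 1))

set_option maxHeartbeats 1000000 in
theorem stmt0
    -- `K` is an imaginary quadratic field, viewed as a subfield of `ℂ`
    (K : Subfield ℂ) [FiniteDimensional ℚ ↥K]
    (hquad : Module.finrank ℚ ↥K = 2)
    (him : ∃ z : ↥K, (z : ℂ).im ≠ 0)
    -- `p ≥ 5` is a prime that splits in `K`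
    (p : ℕ) (hp : p.Prime) (hp5 : 5 ≤ p)
    (hsplit : ∃ P Q : Ideal (NumberField.RingOfIntegers ↥K), P.IsPrime ∧ Q.IsPrime ∧
      P ≠ Q ∧ P * Q = Ideal.span {(p : NumberField.RingOfIntegers ↥K)})
    (m n : ℕ) (hm : 1 ≤ m) (hn : 1 ≤ n)
    -- `σ ∈ Gal(K(μ_{p^n})/K)`
    (σ : Kmu K (p ^ n) ≃ₐ[K] Kmu K (p ^ n))
    -- `c` an integer prime to `p` with `σ(ζ_{p^n}) = ζ_{p^n}^c`
    (c : ℤ) (hc : IsCoprime c (p : ℤ))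
    (hσ : σ (zetaEl K (p ^ n)) = zetaEl K (p ^ n) ^ c)
    -- `c'` an integer with `c'·c^{m-1} ≡ 1 (mod p^n)`
    (c' : ℤ) (hc' : c' * c ^ (m - 1) ≡ 1 [ZMOD (p : ℤ) ^ n]) :
    ∃ y : Kmu K (p ^ n), y ≠ 0 ∧
      σ (souleUnit K p m n) = souleUnit K p m n ^ c' * y ^ (p ^ n) := by
  classical
  have hppos : 0 < p := hp.pos
  have hNpos : 0 < p ^ n := pow_pos hppos n
  have hNZ : (0 : ℤ) < (p : ℤ) ^ n := by positivity
  have hpZ : Prime ((p : ℤ)) := Nat.prime_iff_prime_int.mp hp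
  set S : Finset ℕ := (Finset.range (p ^ n)).filter (fun a => ¬ p ∣ a) with hSdef
  set ζ : Kmu K (p ^ n) := zetaEl K (p ^ n) with hζdef
  -- ζ is a primitive p^n-th root of unity
  have hprim : IsPrimitiveRoot ζ (p ^ n) := by
    have hC : IsPrimitiveRoot (zeta (p ^ n)) (p ^ n) :=
      Complex.isPrimitiveRoot_exp _ hNpos.ne'
    exact hC.of_map_of_injective (f := (Kmu K (p ^ n)).val) Subtype.val_injective
  have hζ0 : ζ ≠ 0 := hprim.ne_zero hNpos.ne'
  have hζN : ζ ^ (p ^ n) = 1 := hprim.pow_eq_one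
  -- integer powers of ζ depend only on residue mod p^n
  have hzcong : ∀ x y : ℤ, x ≡ y [ZMOD ((p : ℤ) ^ n)] → ζ ^ x = ζ ^ y := by
    intro x y hxy
    obtain ⟨k, hk⟩ := hxy.dvd
    have hy : y = x + (p : ℤ) ^ n * k := by linarith
    have hz1 : ζ ^ ((p : ℤ) ^ n * k) = 1 := by
      have h1 : ζ ^ ((p : ℤ) ^ n) = 1 := by
        rw [show ((p : ℤ) ^ n) = ((p ^ n : ℕ) : ℤ) by push_cast; ring, zpow_natCast, hζN]
      rw [zpow_mul, h1, one_zpow]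
    rw [hy, zpow_add₀ hζ0, hz1, mul_one]
  have hred : ∀ x : ℤ, ζ ^ x = ζ ^ ((x % ((p : ℤ) ^ n)).toNat) := by
    intro x
    have hnn : 0 ≤ x % ((p : ℤ) ^ n) := Int.emod_nonneg x hNZ.ne'
    have h1 : ζ ^ x = ζ ^ (x % ((p : ℤ) ^ n)) :=
      hzcong _ _ (Int.emod_emod_of_dvd x dvd_rfl).symm
    rw [h1, ← zpow_natCast ζ, Int.toNat_of_nonneg hnn]
  -- nonvanishing of factors
  have hne : ∀ a ∈ S, (1 : Kmu K (p ^ n)) - ζ ^ a ≠ 0 := by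
    intro a ha
    rw [hSdef, Finset.mem_filter, Finset.mem_range] at ha
    obtain ⟨haN, hpa⟩ := ha
    have ha0 : 0 < a := by
      rcases Nat.eq_zero_or_pos a with h | h
      · exact absurd (h ▸ dvd_zero p) hpa
      · exact h
    have := hprim.pow_ne_one_of_pos_of_lt ha0.ne' haN
    exact sub_ne_zero.mpr (Ne.symm this)
  -- an inverse d of c mod p^n
  have hcop : IsCoprime c ((p : ℤ) ^ n) := hc.pow_right
  obtain ⟨d, e, hde⟩ := hcop
  have hd : d * c ≡ 1 [ZMOD ((p : ℤ) ^ n)] :=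
    Int.modEq_iff_dvd.mpr ⟨e, by linarith⟩
  have hpc : ¬ (p : ℤ) ∣ c := fun h => hpZ.not_unit (hc.isUnit_of_dvd' h dvd_rfl)
  have hpd : ¬ (p : ℤ) ∣ d := by
    intro h
    have h1 : (p : ℤ) ∣ 1 := by
      have h2 : (p : ℤ) ∣ d * c + e * (p : ℤ) ^ n :=
        dvd_add (h.mul_right c) ((dvd_pow_self (p : ℤ) (by omega : n ≠ 0)).mul_left e)
      rwa [hde] at h2
    exact hpZ.not_dvd_one h1
  -- the reindexing maps
  set φ : ℕ → ℕ := fun a => ((c * a) % ((p : ℤ) ^ n)).toNat with hφdef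
  set ψ : ℕ → ℕ := fun b => ((d * b) % ((p : ℤ) ^ n)).toNat with hψdef
  have hcong : ∀ (t : ℤ) (a : ℕ),
      ((((t * a) % ((p : ℤ) ^ n)).toNat : ℕ) : ℤ) ≡ t * a [ZMOD ((p : ℤ) ^ n)] := by
    intro t a
    rw [Int.toNat_of_nonneg (Int.emod_nonneg _ hNZ.ne')]
    exact Int.emod_emod_of_dvd _ dvd_rfl
  have hmemS : ∀ (t : ℤ), ¬ (p : ℤ) ∣ t → ∀ a ∈ S, ((t * a) % ((p : ℤ) ^ n)).toNat ∈ S := by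
    intro t ht a ha
    rw [hSdef, Finset.mem_filter, Finset.mem_range] at ha ⊢
    obtain ⟨haN, hpa⟩ := ha
    have h1 : (t * a) % ((p : ℤ) ^ n) < (p : ℤ) ^ n := Int.emod_lt_of_pos _ hNZ
    have h2 : 0 ≤ (t * a) % ((p : ℤ) ^ n) := Int.emod_nonneg _ hNZ.ne'
    have h3 : ((p ^ n : ℕ) : ℤ) = (p : ℤ) ^ n := by push_cast; ring
    constructor
    · omega
    · intro hdvd
      have h4 : (p : ℤ) ∣ ((t * a) % ((p : ℤ) ^ n)) := by
        have h5 := Int.natCast_dvd_natCast.mpr hdvd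
        rwa [Int.toNat_of_nonneg h2] at h5
      have hdN : (p : ℤ) ∣ (p : ℤ) ^ n := dvd_pow_self _ (by omega : n ≠ 0)
      have h6 : (p : ℤ) ∣ (t * a) := by
        have h7 : (p : ℤ) ∣ ((t * a) % ((p : ℤ) ^ n) + (p : ℤ) ^ n * ((t * a) / ((p : ℤ) ^ n))) :=
          dvd_add h4 (hdN.mul_right _)
        rwa [Int.emod_add_mul_ediv] at h7
      rcases hpZ.dvd_mul.mp h6 with h | h
      · exact ht h
      · exact hpa (Int.natCast_dvd_natCast.mp h)
  have hφmem : ∀ a ∈ S, φ a ∈ S := hmemS c hpc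
  have hψmem : ∀ b ∈ S, ψ b ∈ S := hmemS d hpd
  -- uniqueness of residues
  have huniq : ∀ (x : ℤ) (a : ℕ), a < p ^ n → x ≡ (a : ℤ) [ZMOD ((p : ℤ) ^ n)] →
      (x % ((p : ℤ) ^ n)).toNat = a := by
    intro x a ha hxa
    have h1 : x % ((p : ℤ) ^ n) = (a : ℤ) % ((p : ℤ) ^ n) := hxa
    have h2 : (a : ℤ) % ((p : ℤ) ^ n) = a :=
      Int.emod_eq_of_lt (by positivity) (by exact_mod_cast ha)
    rw [h1, h2, Int.toNat_natCast]
  have hSlt : ∀ a ∈ S, a < p ^ n := by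
    intro a ha
    rw [hSdef, Finset.mem_filter, Finset.mem_range] at ha
    exact ha.1
  have hψφ : ∀ a ∈ S, ψ (φ a) = a := by
    intro a ha
    apply huniq _ _ (hSlt a ha)
    calc (d * ((φ a : ℕ) : ℤ)) ≡ d * (c * a) [ZMOD ((p : ℤ) ^ n)] :=
          Int.ModEq.mul_left d (hcong c a)
      _ = (d * c) * a := by ring
      _ ≡ 1 * a [ZMOD ((p : ℤ) ^ n)] := Int.ModEq.mul_right _ hd
      _ = a := one_mul _
  have hφψ : ∀ b ∈ S, φ (ψ b) = b := by
    intro b hb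
    apply huniq _ _ (hSlt b hb)
    calc (c * ((ψ b : ℕ) : ℤ)) ≡ c * (d * b) [ZMOD ((p : ℤ) ^ n)] :=
          Int.ModEq.mul_left c (hcong d b)
      _ = (d * c) * b := by ring
      _ ≡ 1 * b [ZMOD ((p : ℤ) ^ n)] := Int.ModEq.mul_right _ hd
      _ = b := one_mul _
  -- unfolding the Soulé unit
  have hε : souleUnit K p m n = ∏ a ∈ S, (1 - ζ ^ a) ^ (a ^ (m - 1)) := rfl
  -- applying σ
  have hσε : σ (souleUnit K p m n) = ∏ a ∈ S, (1 - ζ ^ (φ a)) ^ (a ^ (m - 1)) := by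
    rw [hε, map_prod]
    refine Finset.prod_congr rfl ?_
    intro a _
    rw [map_pow, map_sub, map_one, map_pow, hσ]
    have h1 : ((zetaEl K (p ^ n)) ^ c) ^ a = ζ ^ (φ a) := by
      rw [← hζdef, ← zpow_natCast (ζ ^ c) a, ← zpow_mul]
      exact hred (c * a)
    rw [h1]
  -- reindexing
  have hreidx : ∏ a ∈ S, (1 - ζ ^ (φ a)) ^ (a ^ (m - 1))
      = ∏ b ∈ S, (1 - ζ ^ b) ^ ((ψ b) ^ (m - 1)) := by
    refine Finset.prod_bij' (fun a _ => φ a) (fun b _ => ψ b) hφmem hψmem hψφ hφψ ?_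
    intro a ha
    rw [hψφ a ha]
  -- congruence c' ≡ d^(m-1)
  have hcd : c' ≡ d ^ (m - 1) [ZMOD ((p : ℤ) ^ n)] := by
    have h1 : c' * (d * c) ^ (m - 1) ≡ c' * 1 ^ (m - 1) [ZMOD ((p : ℤ) ^ n)] :=
      Int.ModEq.mul_left c' (Int.ModEq.pow (m - 1) hd)
    have h2 : (c' * c ^ (m - 1)) * d ^ (m - 1) ≡ 1 * d ^ (m - 1) [ZMOD ((p : ℤ) ^ n)] :=
      Int.ModEq.mul_right _ hc'
    calc c' = c' * 1 ^ (m - 1) := by ring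
      _ ≡ c' * (d * c) ^ (m - 1) [ZMOD ((p : ℤ) ^ n)] := h1.symm
      _ = (c' * c ^ (m - 1)) * d ^ (m - 1) := by ring
      _ ≡ 1 * d ^ (m - 1) [ZMOD ((p : ℤ) ^ n)] := h2
      _ = d ^ (m - 1) := one_mul _
  -- the exponent discrepancy is divisible by p^n
  have hdvd : ∀ b : ℕ, ((p : ℤ) ^ n) ∣ (((ψ b : ℕ) : ℤ) ^ (m - 1) - c' * (b : ℤ) ^ (m - 1)) := by
    intro b
    have h : c' * (b : ℤ) ^ (m - 1) ≡ ((ψ b : ℕ) : ℤ) ^ (m - 1) [ZMOD ((p : ℤ) ^ n)] :=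
      calc c' * (b : ℤ) ^ (m - 1)
          ≡ d ^ (m - 1) * (b : ℤ) ^ (m - 1) [ZMOD ((p : ℤ) ^ n)] := hcd.mul_right _
        _ = (d * b) ^ (m - 1) := (mul_pow d (b : ℤ) (m - 1)).symm
        _ ≡ ((ψ b : ℕ) : ℤ) ^ (m - 1) [ZMOD ((p : ℤ) ^ n)] :=
            (Int.ModEq.pow (m - 1) (hcong d b)).symm
    exact h.dvd
  -- the exponents of y
  set E : ℕ → ℤ := fun b => (((ψ b : ℕ) : ℤ) ^ (m - 1) - c' * (b : ℤ) ^ (m - 1)) / ((p : ℤ) ^ n)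
    with hEdef
  have hEeq : ∀ b : ℕ, ((ψ b : ℕ) : ℤ) ^ (m - 1) = c' * (b : ℤ) ^ (m - 1) + (p : ℤ) ^ n * E b := by
    intro b
    have := Int.mul_ediv_cancel' (hdvd b)
    rw [hEdef]
    simp only []
    linarith [Int.mul_ediv_cancel' (hdvd b)]
  set y : Kmu K (p ^ n) := ∏ b ∈ S, (1 - ζ ^ b) ^ (E b) with hydef
  have hy0 : y ≠ 0 := by
    rw [hydef]
    rw [Finset.prod_ne_zero_iff]
    intro b hb
    exact zpow_ne_zero _ (hne b hb)
  refine ⟨y, hy0, ?_⟩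
  have key : ∀ b ∈ S, (1 - ζ ^ b : Kmu K (p ^ n)) ^ ((ψ b) ^ (m - 1)) =
      ((1 - ζ ^ b) ^ (b ^ (m - 1))) ^ c' * ((1 - ζ ^ b) ^ (E b)) ^ (p ^ n) := by
    intro b hb
    have h0 := hne b hb
    calc (1 - ζ ^ b : Kmu K (p ^ n)) ^ ((ψ b) ^ (m - 1))
        = (1 - ζ ^ b) ^ ((((ψ b : ℕ) : ℤ)) ^ (m - 1)) := by
          rw [← zpow_natCast]
          congr 1
      _ = (1 - ζ ^ b) ^ (c' * (b : ℤ) ^ (m - 1) + (p : ℤ) ^ n * E b) := by rw [hEeq b]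
      _ = (1 - ζ ^ b) ^ (c' * (b : ℤ) ^ (m - 1)) * (1 - ζ ^ b) ^ ((p : ℤ) ^ n * E b) :=
          zpow_add₀ h0 _ _
      _ = ((1 - ζ ^ b) ^ (b ^ (m - 1))) ^ c' * ((1 - ζ ^ b) ^ (E b)) ^ (p ^ n) := by
          rw [← zpow_natCast ((1 - ζ ^ b) ^ (E b)) (p ^ n),
            ← zpow_natCast (1 - ζ ^ b) (b ^ (m - 1)), ← zpow_mul, ← zpow_mul]
          congr 1
          · congr 1
            push_cast
            ring
          · congr 1
            push_cast
            ring
  calc σ (souleUnit K p m n)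
      = ∏ b ∈ S, (1 - ζ ^ b) ^ ((ψ b) ^ (m - 1)) := by rw [hσε, hreidx]
    _ = ∏ b ∈ S, (((1 - ζ ^ b) ^ (b ^ (m - 1))) ^ c' * ((1 - ζ ^ b) ^ (E b)) ^ (p ^ n)) :=
        Finset.prod_congr rfl key
    _ = (∏ b ∈ S, ((1 - ζ ^ b) ^ (b ^ (m - 1))) ^ c') *
        ∏ b ∈ S, ((1 - ζ ^ b) ^ (E b)) ^ (p ^ n) := Finset.prod_mul_distrib
    _ = souleUnit K p m n ^ c' * y ^ (p ^ n) := by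
        rw [Finset.prod_zpow, Finset.prod_pow, ← hε, ← hydef]
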